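/- As λ → +∞, 2π ∫₀^∞ r e^{−r²} (4 + r⁴ λ²)^{−1/2} dr = π λ^{−1} log λ − γ π λ^{−1} + O(λ^{−2}), where γ is the Euler–Mascheroni constant. -/

import Mathlib

open MeasureTheory Set Filter

lemma integral_log_mul_exp_neg : ∫ t in Ioi (0:ℝ), Real.log t * Real.exp (-t) = -Real.eulerMascheroniConstant := by
  have h1 : HasDerivAt Complex.GammaIntegral
      (∫ t : ℝ in Ioi 0, (t:ℂ) ^ ((1:ℂ) - 1) * (Real.log t * Real.exp (-t))) 1 :=
    Complex.hasDerivAt_GammaIntegral (by norm_num)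
  have heq : (∫ t : ℝ in Ioi 0, (t:ℂ) ^ ((1:ℂ) - 1) * (Real.log t * Real.exp (-t)))
      = ((∫ t in Ioi (0:ℝ), Real.log t * Real.exp (-t) : ℝ) : ℂ) := by
    have : (∫ t : ℝ in Ioi 0, (t:ℂ) ^ ((1:ℂ) - 1) * (Real.log t * Real.exp (-t)))
        = ∫ t : ℝ in Ioi 0, ((Real.log t * Real.exp (-t) : ℝ) : ℂ) := by
      apply integral_congr_ae
      filter_upwards with t
      push_cast
      rw [sub_self, Complex.cpow_zero, one_mul]
    rw [this]; exact integral_ofReal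
  rw [heq] at h1
  set I : ℝ := ∫ t in Ioi (0:ℝ), Real.log t * Real.exp (-t)
  have h2 : HasDerivAt Complex.Gamma ((I:ℂ)) 1 := by
    apply h1.congr_of_eventuallyEq
    have : {s : ℂ | 0 < s.re} ∈ nhds (1:ℂ) := by
      apply (isOpen_lt continuous_const Complex.continuous_re).mem_nhds
      simp
    filter_upwards [this] with s hs
    exact Complex.Gamma_eq_integral hs
  have h3 : HasDerivAt (fun x : ℝ => (Complex.Gamma x).re) ((I:ℂ)).re 1 :=
    h2.real_of_complex
  have h4 : HasDerivAt Real.Gamma I 1 := by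
    simp only [Complex.ofReal_re] at h3
    exact h3
  have := h4.unique Real.hasDerivAt_Gamma_one
  linarith

lemma integrable_exp_neg_Ioi0 : IntegrableOn (fun t : ℝ => Real.exp (-t)) (Ioi 0) := by
  simpa using exp_neg_integrableOn_Ioi 0 (one_pos)

lemma integrable_mul_exp_neg : IntegrableOn (fun t : ℝ => t * Real.exp (-t)) (Ioi 0) := by
  have := Real.GammaIntegral_convergent (s := 2) (by norm_num)
  apply this.congr_fun ?_ measurableSet_Ioi
  intro t ht
  have h : (2:ℝ) - 1 = 1 := by norm_num
  simp only [h, Real.rpow_one, mul_comm]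

lemma integrable_log_mul_exp_neg' : IntegrableOn (fun t : ℝ => Real.log t * Real.exp (-t)) (Ioi 0) := by
  have h1 : IntegrableOn (fun t : ℝ => Real.log t * Real.exp (-t)) (Ioc 0 1) := by
    have hg : IntegrableOn (fun t : ℝ => 2 * t ^ (-(1:ℝ)/2)) (Ioc 0 1) := by
      have := (intervalIntegral.intervalIntegrable_rpow' (r := -(1:ℝ)/2) (by norm_num) (a := 0) (b := 1))
      rw [intervalIntegrable_iff_integrableOn_Ioc_of_le zero_le_one] at this
      exact this.const_mul 2
    refine Integrable.mono' hg ((Real.measurable_log.mul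
      (Real.measurable_exp.comp measurable_neg)).aestronglyMeasurable) ?_
    filter_upwards [ae_restrict_mem measurableSet_Ioc] with t ht
    obtain ⟨ht0, ht1⟩ := ht
    have hlog : Real.log t ≤ 0 := Real.log_nonpos ht0.le ht1
    have h2 : -Real.log t ≤ 2 * t ^ (-(1:ℝ)/2) := by
      have : Real.log (t ^ (-(1:ℝ)/2)) ≤ t ^ (-(1:ℝ)/2) - 1 :=
        Real.log_le_sub_one_of_pos (Real.rpow_pos_of_pos ht0 _)
      rw [Real.log_rpow ht0] at this
      nlinarith [Real.rpow_pos_of_pos ht0 (-(1:ℝ)/2)]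
    rw [norm_mul, Real.norm_eq_abs, Real.norm_eq_abs, abs_of_nonpos hlog,
      Real.abs_exp]
    calc -Real.log t * Real.exp (-t) ≤ -Real.log t * 1 := by
          apply mul_le_mul_of_nonneg_left _ (by linarith)
          exact Real.exp_le_one_iff.mpr (by linarith)
      _ ≤ 2 * t ^ (-(1:ℝ)/2) := by linarith
  have h2 : IntegrableOn (fun t : ℝ => Real.log t * Real.exp (-t)) (Ioi 1) := by
    refine Integrable.mono' (integrable_mul_exp_neg.mono_set (Ioi_subset_Ioi zero_le_one))
      ((Real.measurable_log.mul (Real.measurable_exp.comp measurable_neg)).aestronglyMeasurable) ?_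
    filter_upwards [ae_restrict_mem measurableSet_Ioi] with t ht
    rw [mem_Ioi] at ht
    rw [norm_mul, Real.norm_eq_abs, Real.norm_eq_abs, Real.abs_exp,
      abs_of_nonneg (Real.log_nonneg ht.le)]
    have : Real.log t ≤ t := (Real.log_le_sub_one_of_pos (by linarith)).trans (by linarith)
    exact mul_le_mul_of_nonneg_right this (Real.exp_nonneg _)
  have := h1.union h2
  rwa [Ioc_union_Ioi_eq_Ioi zero_le_one] at this

lemma sqrt_pos_aux {a x : ℝ} (ha : 0 < a) : 0 < Real.sqrt (x^2 + a^2) := by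
  apply Real.sqrt_pos.mpr; positivity

lemma lt_add_sqrt {a x : ℝ} (ha : 0 < a) : 0 < x + Real.sqrt (x^2 + a^2) := by
  have h1 : |x| < Real.sqrt (x^2 + a^2) := by
    rw [← Real.sqrt_sq_eq_abs]
    apply Real.sqrt_lt_sqrt (sq_nonneg x)
    nlinarith
  have := neg_abs_le x
  linarith [abs_nonneg x, (neg_lt_of_abs_lt h1)]

lemma hasDerivAt_ell {a : ℝ} (ha : 0 < a) (x : ℝ) :
    HasDerivAt (fun x => Real.log (x + Real.sqrt (x^2 + a^2)))
      ((Real.sqrt (x^2 + a^2))⁻¹) x := by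
  have hqpos : (0:ℝ) < x^2 + a^2 := by positivity
  have hspos := sqrt_pos_aux (x := x) ha
  have hq : HasDerivAt (fun x : ℝ => x^2 + a^2) (2*x) x := by
    simpa using ((hasDerivAt_pow 2 x).add_const (a^2))
  have hsq : HasDerivAt (fun x : ℝ => Real.sqrt (x^2 + a^2))
      (1 / (2 * Real.sqrt (x^2 + a^2)) * (2*x)) x :=
    (Real.hasDerivAt_sqrt hqpos.ne').comp x hq
  have hadd := (hasDerivAt_id x).add hsq
  have hlog := hadd.log (lt_add_sqrt ha).ne'
  convert hlog using 1
  · rfl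
  show (Real.sqrt (x^2 + a^2))⁻¹ = (1 + 1 / (2 * Real.sqrt (x^2 + a^2)) * (2*x)) / (x + Real.sqrt (x^2 + a^2))
  rw [eq_div_iff (lt_add_sqrt ha).ne']
  field_simp
  ring

lemma ell_abs_le {a x : ℝ} (ha : 0 < a) (hx : 0 < x) :
    |Real.log (x + Real.sqrt (x^2 + a^2))| ≤ |Real.log a| + (Real.log (2+a) + x) := by
  set s := Real.sqrt (x^2 + a^2) with hs
  have hspos := sqrt_pos_aux (x := x) ha
  have hs_ge : a ≤ s :=
    le_trans (le_of_eq (Real.sqrt_sq ha.le).symm) (Real.sqrt_le_sqrt (by nlinarith))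
  have hs_le : s ≤ x + a :=
    le_trans (Real.sqrt_le_sqrt (by nlinarith)) (le_of_eq (Real.sqrt_sq (by linarith)))
  have hxs : 0 < x + s := by linarith
  have hlow : Real.log a ≤ Real.log (x + s) :=
    Real.log_le_log ha (by linarith)
  have hup : Real.log (x + s) ≤ Real.log (2+a) + x := by
    have h1 : x + s ≤ (2+a) * Real.exp x := by
      have := Real.add_one_le_exp x
      nlinarith [Real.exp_pos x]
    calc Real.log (x + s) ≤ Real.log ((2+a) * Real.exp x) := Real.log_le_log hxs h1
      _ = Real.log (2+a) + x := by
          rw [Real.log_mul (by linarith) (Real.exp_pos x).ne', Real.log_exp]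
  have hlog2 : 0 < Real.log (2+a) := Real.log_pos (by linarith)
  rw [abs_le]
  constructor
  · have := neg_abs_le (Real.log a)
    nlinarith
  · have := le_abs_self (Real.log a)
    nlinarith [abs_nonneg (Real.log a)]

lemma integrable_exp_ell {a : ℝ} (ha : 0 < a) :
    IntegrableOn (fun u : ℝ => Real.exp (-u) * Real.log (u + Real.sqrt (u^2 + a^2))) (Ioi 0) := by
  have hg : IntegrableOn (fun u : ℝ =>
      (|Real.log a| + Real.log (2+a)) * Real.exp (-u) + u * Real.exp (-u)) (Ioi 0) :=
    (integrable_exp_neg_Ioi0.const_mul _).add integrable_mul_exp_neg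
  have hcont : Continuous (fun u : ℝ => Real.exp (-u) * Real.log (u + Real.sqrt (u^2 + a^2))) := by
    apply (Real.continuous_exp.comp continuous_neg).mul
    exact Continuous.log
      (continuous_id.add (((continuous_pow 2).add continuous_const).sqrt))
      (fun x => (lt_add_sqrt ha).ne')
  refine Integrable.mono' hg hcont.aestronglyMeasurable ?_
  filter_upwards [ae_restrict_mem measurableSet_Ioi] with x hx
  rw [mem_Ioi] at hx
  rw [norm_mul, Real.norm_eq_abs, Real.norm_eq_abs, Real.abs_exp]
  have hb := ell_abs_le ha hx
  have he : Real.exp (-x) ≤ 1 := Real.exp_le_one_iff.mpr (by linarith)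
  have hepos := Real.exp_pos (-x)
  nlinarith [abs_nonneg (Real.log (x + Real.sqrt (x^2 + a^2))),
    abs_nonneg (Real.log a), mul_le_mul_of_nonneg_left hb hepos.le]

lemma parts_ell {a : ℝ} (ha : 0 < a) :
    ∫ u in Ioi (0:ℝ), Real.exp (-u) * (Real.sqrt (u^2 + a^2))⁻¹
      = -Real.log a + ∫ u in Ioi (0:ℝ), Real.exp (-u) * Real.log (u + Real.sqrt (u^2 + a^2)) := by
  have key := integral_Ioi_mul_deriv_eq_deriv_mul
    (u := fun x : ℝ => Real.exp (-x)) (u' := fun x : ℝ => -Real.exp (-x))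
    (v := fun x : ℝ => Real.log (x + Real.sqrt (x^2 + a^2)))
    (v' := fun x : ℝ => (Real.sqrt (x^2 + a^2))⁻¹) (a := (0:ℝ))
    (a' := Real.log a) (b' := (0:ℝ))
    (fun x _ => by simpa using (hasDerivAt_neg x).exp)
    (fun x _ => hasDerivAt_ell ha x)
    ?_ ?_ ?_ ?_
  · rw [key]
    have : ∫ x in Ioi (0:ℝ), (fun x : ℝ => -Real.exp (-x)) x *
        (fun x : ℝ => Real.log (x + Real.sqrt (x^2 + a^2))) x
        = -∫ x in Ioi (0:ℝ), Real.exp (-x) * Real.log (x + Real.sqrt (x^2 + a^2)) := by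
      rw [← integral_neg]
      congr 1; ext x; ring
    rw [this]
    ring
  · -- IntegrableOn (u * v')
    have hg := integrable_exp_neg_Ioi0.const_mul a⁻¹
    refine Integrable.mono' hg ?_ ?_
    · exact ((Real.continuous_exp.comp continuous_neg).mul
        ((((continuous_pow 2).add continuous_const).sqrt).inv₀
          (fun x => (sqrt_pos_aux ha).ne'))).aestronglyMeasurable
    · filter_upwards with x
      have hspos := sqrt_pos_aux (x := x) ha
      have hs_ge : a ≤ Real.sqrt (x^2 + a^2) :=
        le_trans (le_of_eq (Real.sqrt_sq ha.le).symm) (Real.sqrt_le_sqrt (by nlinarith))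
      simp only [Pi.mul_apply, norm_mul, Real.norm_eq_abs, Real.abs_exp,
        abs_of_pos (inv_pos.mpr hspos)]
      rw [mul_comm (a⁻¹)]
      exact mul_le_mul_of_nonneg_left
        ((inv_le_inv₀ hspos ha).mpr hs_ge) (Real.exp_pos _).le
  · -- IntegrableOn (u' * v)
    exact IntegrableOn.congr_fun (integrable_exp_ell ha).neg
      (fun x _ => by simp only [Pi.neg_apply, Pi.mul_apply]; ring) measurableSet_Ioi
  · -- tendsto at 0+
    have hc : ContinuousAt (fun x : ℝ => Real.exp (-x) *
        Real.log (x + Real.sqrt (x^2 + a^2))) 0 := by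
      apply ContinuousAt.mul
      · exact (Real.continuous_exp.comp continuous_neg).continuousAt
      · exact (Continuous.log
          (continuous_id.add (((continuous_pow 2).add continuous_const).sqrt))
          (fun x => (lt_add_sqrt ha).ne')).continuousAt
    have hval : Real.exp (-(0:ℝ)) * Real.log (0 + Real.sqrt ((0:ℝ)^2 + a^2)) = Real.log a := by
      simp [Real.sqrt_sq ha.le]
    have h := hc.tendsto.mono_left (nhdsWithin_le_nhds (s := Ioi (0:ℝ)))
    rw [hval] at h
    exact h
  · -- tendsto at top
    apply squeeze_zero_norm'
    · filter_upwards [eventually_gt_atTop (0:ℝ)] with x hx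
      show ‖Real.exp (-x) * Real.log (x + Real.sqrt (x^2 + a^2))‖ ≤
        (|Real.log a| + Real.log (2+a)) * Real.exp (-x) + x * Real.exp (-x)
      rw [norm_mul, Real.norm_eq_abs, Real.norm_eq_abs, Real.abs_exp]
      have hb := ell_abs_le ha hx
      have hepos := Real.exp_pos (-x)
      nlinarith [mul_le_mul_of_nonneg_left hb hepos.le]
    · have h1 : Tendsto (fun x : ℝ => (|Real.log a| + Real.log (2+a)) * Real.exp (-x))
          atTop (nhds 0) := by
        simpa using Real.tendsto_exp_neg_atTop_nhds_zero.const_mul (|Real.log a| + Real.log (2+a))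
      have h2 : Tendsto (fun x : ℝ => x * Real.exp (-x)) atTop (nhds 0) := by
        simpa using Real.tendsto_pow_mul_exp_neg_atTop_nhds_zero 1
      simpa using h1.add h2

lemma integrable_exp_log2u : IntegrableOn (fun u : ℝ => Real.exp (-u) * Real.log (2*u)) (Ioi 0) := by
  have h : IntegrableOn (fun u : ℝ => Real.exp (-u) * Real.log 2 + Real.log u * Real.exp (-u))
      (Ioi 0) := (integrable_exp_neg_Ioi0.mul_const _).add integrable_log_mul_exp_neg'
  apply h.congr_fun ?_ measurableSet_Ioi
  intro u hu
  rw [mem_Ioi] at hu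
  simp only [Real.log_mul two_ne_zero hu.ne']
  ring

lemma err_nonneg {a : ℝ} (ha : 0 < a) :
    0 ≤ ∫ u in Ioi (0:ℝ),
      Real.exp (-u) * (Real.log (u + Real.sqrt (u^2 + a^2)) - Real.log (2*u)) := by
  apply setIntegral_nonneg measurableSet_Ioi
  intro u hu
  rw [mem_Ioi] at hu
  have h1 : u ≤ Real.sqrt (u^2 + a^2) :=
    le_trans (le_of_eq (Real.sqrt_sq hu.le).symm) (Real.sqrt_le_sqrt (by nlinarith))
  have h2 : Real.log (2*u) ≤ Real.log (u + Real.sqrt (u^2 + a^2)) :=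
    Real.log_le_log (by linarith) (by linarith)
  have := Real.exp_pos (-u)
  nlinarith

lemma err_le {a : ℝ} (ha : 0 < a) :
    (∫ u in Ioi (0:ℝ),
      Real.exp (-u) * (Real.log (u + Real.sqrt (u^2 + a^2)) - Real.log (2*u))) ≤ 8 * a := by
  set f : ℝ → ℝ := fun u =>
    Real.exp (-u) * (Real.log (u + Real.sqrt (u^2 + a^2)) - Real.log (2*u)) with hf_def
  have hf_int : IntegrableOn f (Ioi 0) := by
    apply IntegrableOn.congr_fun ((integrable_exp_ell ha).sub integrable_exp_log2u)
      ?_ measurableSet_Ioi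
    intro u _; simp only [Pi.sub_apply, hf_def]; ring
  have hsplit : (∫ u in Ioi (0:ℝ), f u)
      = (∫ u in Ioc (0:ℝ) a, f u) + ∫ u in Ioi a, f u := by
    rw [← setIntegral_union (Ioc_disjoint_Ioi le_rfl) measurableSet_Ioi
      (hf_int.mono_set Ioc_subset_Ioi_self) (hf_int.mono_set (Ioi_subset_Ioi ha.le)),
      Ioc_union_Ioi_eq_Ioi ha.le]
  have hE1 : (∫ u in Ioc (0:ℝ) a, f u) ≤ 7 * a := by
    have hg_int : IntegrableOn (fun u : ℝ => 2 * Real.sqrt (3*a) * u ^ (-(1:ℝ)/2)) (Ioc 0 a) := by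
      have := (intervalIntegral.intervalIntegrable_rpow' (r := -(1:ℝ)/2) (by norm_num)
        (a := 0) (b := a))
      rw [intervalIntegrable_iff_integrableOn_Ioc_of_le ha.le] at this
      exact this.const_mul _
    have hmono : (∫ u in Ioc (0:ℝ) a, f u)
        ≤ ∫ u in Ioc (0:ℝ) a, 2 * Real.sqrt (3*a) * u ^ (-(1:ℝ)/2) := by
      apply setIntegral_mono_on (hf_int.mono_set Ioc_subset_Ioi_self) hg_int measurableSet_Ioc
      intro u hu
      obtain ⟨hu0, hua⟩ := hu
      have hs_le : Real.sqrt (u^2 + a^2) ≤ 2*a :=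
        le_trans (Real.sqrt_le_sqrt (by nlinarith)) (le_of_eq (Real.sqrt_sq (by linarith)))
      have h3a : 0 < 3*a := by linarith
      have h2u : 0 < 2*u := by linarith
      have hd_le : Real.log (u + Real.sqrt (u^2 + a^2)) - Real.log (2*u)
          ≤ Real.log (3*a / (2*u)) := by
        rw [Real.log_div h3a.ne' h2u.ne']
        have : Real.log (u + Real.sqrt (u^2 + a^2)) ≤ Real.log (3*a) :=
          Real.log_le_log (by positivity ) (by linarith)
        linarith
      have hy : (0:ℝ) < 3*a/(2*u) := by positivity
      have hlog_sqrt : Real.log (3*a/(2*u)) ≤ 2 * Real.sqrt (3*a/(2*u)) := by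
        have h1 : Real.log (Real.sqrt (3*a/(2*u))) ≤ Real.sqrt (3*a/(2*u)) - 1 :=
          Real.log_le_sub_one_of_pos (Real.sqrt_pos.mpr hy)
        rw [Real.log_sqrt hy.le] at h1
        nlinarith [Real.sqrt_nonneg (3*a/(2*u))]
      have hsq : Real.sqrt (3*a/(2*u)) ≤ Real.sqrt (3*a) * u ^ (-(1:ℝ)/2) := by
        have hrw : u ^ (-(1:ℝ)/2) = (Real.sqrt u)⁻¹ := by
          rw [show -(1:ℝ)/2 = -(1/2) by norm_num, Real.rpow_neg hu0.le,
            Real.sqrt_eq_rpow]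
        rw [hrw, Real.sqrt_div h3a.le, div_eq_mul_inv]
        apply mul_le_mul_of_nonneg_left ?_ (Real.sqrt_nonneg _)
        apply inv_anti₀ (Real.sqrt_pos.mpr hu0)
        exact Real.sqrt_le_sqrt (by linarith)
      have hexp : Real.exp (-u) ≤ 1 := Real.exp_le_one_iff.mpr (by linarith)
      have hd_nonneg : 0 ≤ Real.log (u + Real.sqrt (u^2 + a^2)) - Real.log (2*u) := by
        have h1 : u ≤ Real.sqrt (u^2 + a^2) :=
          le_trans (le_of_eq (Real.sqrt_sq hu0.le).symm) (Real.sqrt_le_sqrt (by nlinarith))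
        have := Real.log_le_log h2u (by linarith : 2*u ≤ u + Real.sqrt (u^2+a^2))
        linarith
      calc f u ≤ Real.log (u + Real.sqrt (u^2 + a^2)) - Real.log (2*u) := by
            rw [hf_def]
            exact mul_le_of_le_one_left hd_nonneg hexp
        _ ≤ 2 * Real.sqrt (3*a/(2*u)) := le_trans hd_le hlog_sqrt
        _ ≤ 2 * Real.sqrt (3*a) * u ^ (-(1:ℝ)/2) := by
            rw [mul_assoc]; exact mul_le_mul_of_nonneg_left hsq (by norm_num)
    have hval : (∫ u in Ioc (0:ℝ) a, 2 * Real.sqrt (3*a) * u ^ (-(1:ℝ)/2))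
        = 2 * Real.sqrt (3*a) * (2 * Real.sqrt a) := by
      rw [MeasureTheory.integral_const_mul, ← intervalIntegral.integral_of_le ha.le,
        integral_rpow (Or.inl (by norm_num))]
      rw [Real.zero_rpow (by norm_num), Real.sqrt_eq_rpow]
      norm_num
      left
      rw [Real.sqrt_eq_rpow]
      ring
    have hsqrt3 : Real.sqrt 3 ≤ 7/4 := by
      have h1 : Real.sqrt 3 ≤ Real.sqrt ((7/4)^2) := Real.sqrt_le_sqrt (by norm_num)
      rwa [Real.sqrt_sq (by norm_num : (0:ℝ) ≤ 7/4)] at h1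
    have hprod : Real.sqrt (3*a) * Real.sqrt a = Real.sqrt 3 * a := by
      rw [← Real.sqrt_mul (by linarith : (0:ℝ) ≤ 3*a), mul_assoc,
        Real.sqrt_mul (by norm_num : (0:ℝ) ≤ 3), Real.sqrt_mul_self ha.le]
    calc (∫ u in Ioc (0:ℝ) a, f u) ≤ 2 * Real.sqrt (3*a) * (2 * Real.sqrt a) :=
        le_trans hmono (le_of_eq hval)
      _ = 4 * (Real.sqrt (3*a) * Real.sqrt a) := by ring
      _ = 4 * (Real.sqrt 3 * a) := by rw [hprod]
      _ ≤ 7 * a := by nlinarith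
  have hE2 : (∫ u in Ioi a, f u) ≤ a / 4 := by
    have hg_int : IntegrableOn (fun u : ℝ => a^2/4 * u ^ (-(2:ℝ))) (Ioi a) :=
      (integrableOn_Ioi_rpow_of_lt (by norm_num) ha).const_mul _
    have hmono : (∫ u in Ioi a, f u) ≤ ∫ u in Ioi a, a^2/4 * u ^ (-(2:ℝ)) := by
      apply setIntegral_mono_on (hf_int.mono_set (Ioi_subset_Ioi ha.le)) hg_int
        measurableSet_Ioi
      intro u hu
      rw [mem_Ioi] at hu
      have hu0 : 0 < u := lt_trans ha hu
      have h2u : 0 < 2*u := by linarith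
      have hs_le : Real.sqrt (u^2 + a^2) ≤ u + a^2/(2*u) := by
        refine le_trans (Real.sqrt_le_sqrt ?_) (le_of_eq (Real.sqrt_sq (by positivity)))
        have h := sq_nonneg (a^2/(2*u))
        have heq : 2*u*(a^2/(2*u)) = a^2 := by field_simp
        nlinarith
      have harg : (u + Real.sqrt (u^2+a^2)) ≤ (2*u) * (1 + a^2/(4*u^2)) := by
        have : (2*u) * (1 + a^2/(4*u^2)) = 2*u + a^2/(2*u) := by field_simp; ring
        linarith
      have hd_le : Real.log (u + Real.sqrt (u^2 + a^2)) - Real.log (2*u)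
          ≤ a^2/(4*u^2) := by
        have hpos : (0:ℝ) < 1 + a^2/(4*u^2) := by positivity
        have h1 : Real.log (u + Real.sqrt (u^2+a^2)) ≤ Real.log ((2*u) * (1 + a^2/(4*u^2))) :=
          Real.log_le_log (by positivity) harg
        rw [Real.log_mul h2u.ne' hpos.ne'] at h1
        have h2 : Real.log (1 + a^2/(4*u^2)) ≤ a^2/(4*u^2) := by
          have := Real.log_le_sub_one_of_pos hpos
          linarith
        linarith
      have hexp : Real.exp (-u) ≤ 1 := Real.exp_le_one_iff.mpr (by linarith)
      have hd_nonneg : 0 ≤ Real.log (u + Real.sqrt (u^2 + a^2)) - Real.log (2*u) := by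
        have h1 : u ≤ Real.sqrt (u^2 + a^2) :=
          le_trans (le_of_eq (Real.sqrt_sq hu0.le).symm) (Real.sqrt_le_sqrt (by nlinarith))
        have := Real.log_le_log h2u (by linarith : 2*u ≤ u + Real.sqrt (u^2+a^2))
        linarith
      have hrw : u ^ (-(2:ℝ)) = (u^2)⁻¹ := by
        rw [Real.rpow_neg hu0.le, show ((2:ℝ) = ((2:ℕ):ℝ)) by norm_num, Real.rpow_natCast]
      calc f u ≤ Real.log (u + Real.sqrt (u^2 + a^2)) - Real.log (2*u) := by
            rw [hf_def]
            exact mul_le_of_le_one_left hd_nonneg hexp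
        _ ≤ a^2/(4*u^2) := hd_le
        _ = a^2/4 * u ^ (-(2:ℝ)) := by rw [hrw]; ring
    have hval : (∫ u in Ioi a, a^2/4 * u ^ (-(2:ℝ))) = a/4 := by
      rw [MeasureTheory.integral_const_mul, integral_Ioi_rpow_of_lt (by norm_num) ha]
      rw [show (-(2:ℝ) + 1) = -1 by norm_num, Real.rpow_neg_one]
      field_simp
    linarith
  rw [hsplit]
  linarith

lemma integral_exp_log2u : ∫ u in Ioi (0:ℝ), Real.exp (-u) * Real.log (2*u)
    = Real.log 2 - Real.eulerMascheroniConstant := by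
  have h1 : ∫ u in Ioi (0:ℝ), (Real.exp (-u) * Real.log 2 + Real.log u * Real.exp (-u))
      = Real.log 2 - Real.eulerMascheroniConstant := by
    rw [integral_add (integrable_exp_neg_Ioi0.mul_const _) integrable_log_mul_exp_neg',
      MeasureTheory.integral_mul_const, integral_exp_neg_Ioi_zero, integral_log_mul_exp_neg]
    ring
  rw [← h1]
  apply setIntegral_congr_fun measurableSet_Ioi
  intro u hu
  rw [mem_Ioi] at hu
  simp only [Real.log_mul two_ne_zero hu.ne']
  ring

lemma G_est {a : ℝ} (ha : 0 < a) :
    |(∫ u in Ioi (0:ℝ), Real.exp (-u) * (Real.sqrt (u^2 + a^2))⁻¹)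
      - (Real.log 2 - Real.log a - Real.eulerMascheroniConstant)| ≤ 8 * a := by
  have hsub : ∫ u in Ioi (0:ℝ),
      Real.exp (-u) * (Real.log (u + Real.sqrt (u^2 + a^2)) - Real.log (2*u))
      = (∫ u in Ioi (0:ℝ), Real.exp (-u) * Real.log (u + Real.sqrt (u^2 + a^2)))
        - ∫ u in Ioi (0:ℝ), Real.exp (-u) * Real.log (2*u) := by
    rw [← integral_sub (integrable_exp_ell ha) integrable_exp_log2u]
    apply setIntegral_congr_fun measurableSet_Ioi
    intro u _
    ring
  rw [parts_ell ha]
  have h0 := err_nonneg ha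
  have h8 := err_le ha
  rw [hsub, integral_exp_log2u] at h0 h8
  rw [abs_le]
  constructor <;> nlinarith

theorem stmt_14 :
    ∃ C Λ : ℝ, ∀ lam : ℝ, Λ ≤ lam →
      |2 * Real.pi * (∫ r in Set.Ioi (0:ℝ),
          r * Real.exp (-r ^ 2) * (4 + r ^ 4 * lam ^ 2) ^ (-(1 : ℝ) / 2))
        - (Real.pi * lam⁻¹ * Real.log lam
            - Real.eulerMascheroniConstant * Real.pi * lam⁻¹)|
      ≤ C * lam ^ (-(2 : ℝ)) := by
  refine ⟨16 * Real.pi, 2, fun lam hlam => ?_⟩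
  have hlam0 : (0:ℝ) < lam := by linarith
  set a : ℝ := 2 / lam with ha_def
  have ha : 0 < a := by positivity
  -- change of variables u = r^2
  set g : ℝ → ℝ := fun u => Real.exp (-u) * (4 + u^2 * lam^2) ^ (-(1:ℝ)/2) with hg_def
  have hcov : (∫ r in Ioi (0:ℝ), r * Real.exp (-r ^ 2) * (4 + r ^ 4 * lam ^ 2) ^ (-(1:ℝ)/2))
      = (1/2) * ∫ u in Ioi (0:ℝ), g u := by
    have h := integral_comp_rpow_Ioi_of_pos (g := g) (p := 2) two_pos
    have h2 : (∫ x in Ioi (0:ℝ), (2 * x ^ ((2:ℝ) - 1)) • g (x ^ (2:ℝ)))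
        = ∫ x in Ioi (0:ℝ), 2 * (x * Real.exp (-x ^ 2) * (4 + x ^ 4 * lam ^ 2) ^ (-(1:ℝ)/2)) := by
      apply setIntegral_congr_fun measurableSet_Ioi
      intro x hx
      rw [mem_Ioi] at hx
      dsimp only
      have e1 : x ^ ((2:ℝ) - 1) = x := by
        rw [show (2:ℝ) - 1 = 1 by norm_num, Real.rpow_one]
      have e2 : x ^ (2:ℝ) = x ^ 2 := by
        rw [show (2:ℝ) = ((2:ℕ):ℝ) by norm_num, Real.rpow_natCast]
      rw [smul_eq_mul, e1, e2, hg_def]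
      have e3 : (x ^ 2) ^ 2 = x ^ 4 := by ring
      simp only [e3]
      ring
    rw [h2, MeasureTheory.integral_const_mul] at h
    linarith
  -- scaling
  have hscale : (∫ u in Ioi (0:ℝ), g u)
      = lam⁻¹ * ∫ u in Ioi (0:ℝ), Real.exp (-u) * (Real.sqrt (u^2 + a^2))⁻¹ := by
    rw [← MeasureTheory.integral_const_mul]
    apply setIntegral_congr_fun measurableSet_Ioi
    intro u hu
    rw [mem_Ioi] at hu
    rw [hg_def]
    dsimp only
    have hbase : 4 + u^2 * lam^2 = lam^2 * (u^2 + a^2) := by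
      rw [ha_def]
      field_simp
      ring
    have hpos : (0:ℝ) ≤ u^2 + a^2 := by positivity
    rw [hbase, Real.mul_rpow (sq_nonneg lam) hpos]
    have e1 : (lam^2 : ℝ) ^ (-(1:ℝ)/2) = lam⁻¹ := by
      rw [show (lam^2 : ℝ) = lam ^ ((2:ℕ):ℝ) by rw [Real.rpow_natCast],
        ← Real.rpow_mul hlam0.le]
      norm_num [Real.rpow_neg_one]
    have e2 : (u^2 + a^2 : ℝ) ^ (-(1:ℝ)/2) = (Real.sqrt (u^2 + a^2))⁻¹ := by
      rw [show -(1:ℝ)/2 = -(1/2) by norm_num, Real.rpow_neg hpos, Real.sqrt_eq_rpow]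
    rw [e1, e2]
    ring
  rw [hcov, hscale]
  set G : ℝ := ∫ u in Ioi (0:ℝ), Real.exp (-u) * (Real.sqrt (u^2 + a^2))⁻¹ with hG_def
  have hGest := G_est ha
  rw [← hG_def] at hGest
  have hloga : Real.log a = Real.log 2 - Real.log lam := by
    rw [ha_def, Real.log_div two_ne_zero hlam0.ne']
  have hkey : 2 * Real.pi * (1/2 * (lam⁻¹ * G))
      - (Real.pi * lam⁻¹ * Real.log lam - Real.eulerMascheroniConstant * Real.pi * lam⁻¹)
      = (Real.pi * lam⁻¹) * (G - (Real.log 2 - Real.log a - Real.eulerMascheroniConstant)) := by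
    rw [hloga]
    ring
  rw [hkey, abs_mul, abs_of_pos (by positivity : (0:ℝ) < Real.pi * lam⁻¹)]
  have hbound : Real.pi * lam⁻¹ * |G - (Real.log 2 - Real.log a - Real.eulerMascheroniConstant)|
      ≤ Real.pi * lam⁻¹ * (8 * a) :=
    mul_le_mul_of_nonneg_left hGest (by positivity)
  have epow : lam ^ (-(2:ℝ)) = (lam^2)⁻¹ := by
    rw [show -(2:ℝ) = -((2:ℕ):ℝ) by norm_num, Real.rpow_neg hlam0.le, Real.rpow_natCast]
  have hfinal : Real.pi * lam⁻¹ * (8 * a) = 16 * Real.pi * lam ^ (-(2:ℝ)) := by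
    rw [epow, ha_def]
    field_simp
    ring
  linarith
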